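/- The trivial semigroup ℕ is the unique numerical semigroup whose ν sequence is 1, 2, 3, 4, 5, …, i.e., satisfies ν_i = i + 1 for all i. More generally, the ν sequence of a numerical semigroup is strictly increasing if and only if the semigroup is ℕ. -/

import Mathlib

structure NumericalSemigroup where
  carrier : Set ℕ
  zero_mem : 0 ∈ carrier
  add_mem : ∀ {a b : ℕ}, a ∈ carrier → b ∈ carrier → a + b ∈ carrier
  finite_compl : Set.Finite carrierᶜ

namespace NumericalSemigroup

/-- The genus: the number of gaps. -/
noncomputable def genus (Λ : NumericalSemigroup) : ℕ := Λ.carrierᶜ.ncard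

/-- The conductor: the smallest `c` with `c + ℕ ⊆ Λ`. -/
noncomputable def conductor (Λ : NumericalSemigroup) : ℕ := sInf {c : ℕ | ∀ n, c ≤ n → n ∈ Λ.carrier}

/-- `f` is the (unique) increasing enumeration of `Λ`. -/
noncomputable def IsEnum (Λ : NumericalSemigroup) (f : ℕ → ℕ) : Prop :=
  StrictMono f ∧ Set.range f = Λ.carrier

/-- The Arf property: `λ_i + λ_j - λ_k ∈ Λ` for all `i ≥ j ≥ k`. -/
noncomputable def IsArf (Λ : NumericalSemigroup) : Prop :=
  ∀ f : ℕ → ℕ, Λ.IsEnum f → ∀ i j k : ℕ, k ≤ j → j ≤ i → f i + f j - f k ∈ Λ.carrier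

end NumericalSemigroup

/-- `ν_i = #{j : λ_i - λ_j ∈ Λ}`, for `f` the enumeration of `Λ`. -/
noncomputable def NumericalSemigroup.nu (Λ : NumericalSemigroup) (f : ℕ → ℕ) (i : ℕ) : ℕ :=
  {j : ℕ | j ≤ i ∧ f i - f j ∈ Λ.carrier}.ncard

theorem stmt17 (Λ : NumericalSemigroup) (f : ℕ → ℕ) (hf : Λ.IsEnum f) :
    ((∀ i : ℕ, Λ.nu f i = i + 1) ↔ Λ.carrier = Set.univ) ∧
    (StrictMono (Λ.nu f) ↔ Λ.carrier = Set.univ) := by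
  obtain ⟨hmono, hrange⟩ := hf
  have h0mem : (0 : ℕ) ∈ Set.range f := hrange ▸ Λ.zero_mem
  obtain ⟨k, hk⟩ := h0mem
  have hf0 : f 0 = 0 := by
    have h := hmono.monotone (Nat.zero_le k)
    omega
  -- upper bound ν i ≤ i + 1
  have hsub : ∀ i, {j : ℕ | j ≤ i ∧ f i - f j ∈ Λ.carrier} ⊆ ↑(Finset.Iic i) := by
    intro i j hj; simpa using hj.1
  have hub : ∀ i, Λ.nu f i ≤ i + 1 := by
    intro i
    calc Λ.nu f i ≤ (↑(Finset.Iic i) : Set ℕ).ncard :=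
          Set.ncard_le_ncard (hsub i) (Finset.finite_toSet _)
      _ = i + 1 := by rw [Set.ncard_coe_finset, Nat.card_Iic]
  -- ν 0 = 1
  have hnu0 : Λ.nu f 0 = 1 := by
    have : {j : ℕ | j ≤ 0 ∧ f 0 - f j ∈ Λ.carrier} = {0} := by
      ext j
      simp only [Set.mem_setOf_eq, Nat.le_zero, Set.mem_singleton_iff]
      constructor
      · rintro ⟨rfl, -⟩; rfl
      · rintro rfl; exact ⟨rfl, by simpa [Nat.sub_self] using Λ.zero_mem⟩
    rw [NumericalSemigroup.nu, this, Set.ncard_singleton]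
  -- if carrier = univ then ν i = i + 1
  have huniv : Λ.carrier = Set.univ → ∀ i, Λ.nu f i = i + 1 := by
    intro h i
    have : {j : ℕ | j ≤ i ∧ f i - f j ∈ Λ.carrier} = ↑(Finset.Iic i) := by
      ext j; simp [h]
    rw [NumericalSemigroup.nu, this, Set.ncard_coe_finset, Nat.card_Iic]
  -- key: ν i = i + 1 everywhere forces carrier = univ
  have key : (∀ i : ℕ, Λ.nu f i = i + 1) → Λ.carrier = Set.univ := by
    intro hnu
    by_contra hne
    have hcne : Λ.carrierᶜ.Nonempty := Set.nonempty_compl.mpr hne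
    obtain ⟨F, hFmem, hFmax⟩ :=
      Set.Finite.exists_maximalFor id _ Λ.finite_compl hcne
    have hgt : ∀ n, F < n → n ∈ Λ.carrier := by
      intro n hn
      by_contra hnot
      have := hFmax (j := n) hnot (le_of_lt hn)
      simp only [id] at this
      omega
    have hf1mem : f 1 ∈ Λ.carrier := hrange ▸ Set.mem_range_self 1
    have hf1pos : 0 < f 1 := hf0 ▸ hmono Nat.zero_lt_one
    have hmem : F + f 1 ∈ Λ.carrier := hgt _ (by omega)
    obtain ⟨i, hi⟩ := (hrange ▸ hmem : F + f 1 ∈ Set.range f)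
    have hFpos : 0 < F := by
      rcases Nat.eq_zero_or_pos F with h | h
      · exact absurd (h ▸ Λ.zero_mem) hFmem
      · exact h
    have h1i : 1 < i := by
      have : f 1 < f i := by omega
      exact hmono.lt_iff_lt.mp this
    -- the counting set is all of Iic i
    have heq : {j : ℕ | j ≤ i ∧ f i - f j ∈ Λ.carrier} = ↑(Finset.Iic i) := by
      exact Set.eq_of_subset_of_ncard_le (hsub i)
        (by rw [Set.ncard_coe_finset, Nat.card_Iic]; exact (hnu i).ge)
        (Finset.finite_toSet _)
    have h1mem : (1 : ℕ) ∈ {j : ℕ | j ≤ i ∧ f i - f j ∈ Λ.carrier} := by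
      rw [heq]; simpa using le_of_lt h1i
    have : F ∈ Λ.carrier := by
      have := h1mem.2
      rwa [hi, Nat.add_sub_cancel] at this
    exact hFmem this
  constructor
  · exact ⟨key, huniv⟩
  constructor
  · intro hsm
    apply key
    have hlb : ∀ i, i + 1 ≤ Λ.nu f i := by
      intro i
      induction i with
      | zero => omega
      | succ n ih =>
        have h2 := hsm (Nat.lt_succ_self n)
        simp only [Nat.succ_eq_add_one] at h2
        omega
    intro i
    exact le_antisymm (hub i) (hlb i)
  · intro h
    have := huniv h
    intro a b hab
    rw [this a, this b]
    omega
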